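/- Let G=(V,E) be an r-rank hypergraph with p := Σ_{e∈E} |e|, and let 0 < φ ≤ 1/(r−1). Then there exists a partition {X₁,…,X_k} of V such that (1) Σᵢ |δ(Xᵢ)| = O(r·φ·p·log n), and (2) for every i and every nonempty S ⊊ Xᵢ, the number of hyperedges intersecting both S and Xᵢ∖S is at least φ·min{vol(S), vol(Xᵢ∖S)}. -/

import Mathlib

open Finset

lemma finpartition_union {α : Type*} [DecidableEq α] {A B : Finset α} (h : Disjoint A B)
    (PA : Finpartition A) (PB : Finpartition B) :
    ∃ P : Finpartition (A ∪ B), P.parts = PA.parts ∪ PB.parts := by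
  refine ⟨⟨PA.parts ∪ PB.parts, ?_, ?_, ?_⟩, rfl⟩
  · rw [Finset.supIndep_iff_pairwiseDisjoint]
    intro x hx y hy hxy
    simp only [coe_union, Set.mem_union, mem_coe] at hx hy
    rcases hx with hx | hx <;> rcases hy with hy | hy
    · exact PA.disjoint hx hy hxy
    · exact h.mono (PA.le hx) (PB.le hy)
    · exact (h.symm).mono (PB.le hx) (PA.le hy)
    · exact PB.disjoint hx hy hxy
  · rw [Finset.sup_union, PA.sup_parts, PB.sup_parts, Finset.sup_eq_union]
  · simp only [mem_union, not_or]
    exact ⟨PA.bot_notMem, PB.bot_notMem⟩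

variable {n : ℕ}

/-- volume of a vertex set -/
def hvol (E : Finset (Finset (Fin n))) (S : Finset (Fin n)) : ℝ :=
  ∑ v ∈ S, ((E.filter (fun e => v ∈ e)).card : ℝ)

/-- edges crossing between S and T -/
def hcross (E : Finset (Finset (Fin n))) (S T : Finset (Fin n)) : Finset (Finset (Fin n)) :=
  E.filter (fun e => (e ∩ S).Nonempty ∧ (e ∩ T).Nonempty)

def hgood (E : Finset (Finset (Fin n))) (φ : ℝ) (X : Finset (Fin n)) : Prop :=
  ∀ S ⊆ X, S.Nonempty → (X \ S).Nonempty →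
    φ * min (hvol E S) (hvol E (X \ S)) ≤ ((hcross E S (X \ S)).card : ℝ)

lemma hvol_nonneg (E : Finset (Finset (Fin n))) (S : Finset (Fin n)) : 0 ≤ hvol E S := by
  unfold hvol; positivity

lemma hvol_union (E : Finset (Finset (Fin n))) {A B : Finset (Fin n)} (h : Disjoint A B) :
    hvol E (A ∪ B) = hvol E A + hvol E B := by
  unfold hvol; rw [Finset.sum_union h]

lemma sparse_cut_exists {E : Finset (Finset (Fin n))} {φ : ℝ} (hφ : 0 ≤ φ)
    {X : Finset (Fin n)} (h : ¬ hgood E φ X) :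
    ∃ A B : Finset (Fin n), Disjoint A B ∧ A ∪ B = X ∧ A.Nonempty ∧ B.Nonempty ∧
      2 * A.card ≤ X.card ∧ ((hcross E A B).card : ℝ) < φ * hvol E A := by
  unfold hgood at h
  push_neg at h
  obtain ⟨S, hSX, hS, hT, hlt⟩ := h
  have hdisj : Disjoint S (X \ S) := disjoint_sdiff
  have hunion : S ∪ (X \ S) = X := Finset.union_sdiff_of_subset hSX
  have hcards : S.card + (X \ S).card = X.card := by
    rw [← Finset.card_union_of_disjoint hdisj, hunion]
  have hsym : (hcross E (X \ S) S).card = (hcross E S (X \ S)).card := by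
    unfold hcross
    congr 1
    apply Finset.filter_congr
    intro e _
    exact and_comm
  rcases le_total S.card (X \ S).card with hle | hle
  · exact ⟨S, X \ S, hdisj, hunion, hS, hT, by omega,
      lt_of_lt_of_le hlt (mul_le_mul_of_nonneg_left (min_le_left _ _) hφ)⟩
  · refine ⟨X \ S, S, hdisj.symm, by rw [Finset.union_comm]; exact hunion, hT, hS, by omega, ?_⟩
    rw [hsym]
    calc ((hcross E S (X \ S)).card : ℝ) < φ * min (hvol E S) (hvol E (X \ S)) := hlt
      _ ≤ φ * hvol E (X \ S) := mul_le_mul_of_nonneg_left (min_le_right _ _) hφ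

lemma hmain_empty (E : Finset (Finset (Fin n))) (φ : ℝ) :
    ∃ P : Finpartition (∅ : Finset (Fin n)), (∀ Y ∈ P.parts, hgood E φ Y) ∧
      ((E.filter (fun e =>
          2 ≤ (P.parts.filter (fun Y => (e ∩ Y).Nonempty)).card)).card : ℝ)
        ≤ φ * hvol E ∅ * Real.logb 2 (∅ : Finset (Fin n)).card := by
  refine ⟨(Finpartition.empty _).copy bot_eq_empty, ?_, ?_⟩
  · intro Y hY
    simp [Finpartition.copy, Finpartition.empty] at hY
  · have : (E.filter (fun e =>
        2 ≤ ((((Finpartition.empty (Finset (Fin n))).copy bot_eq_empty).parts.filter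
          (fun Y => (e ∩ Y).Nonempty)).card))) = ∅ := by
      apply Finset.filter_eq_empty_iff.mpr
      intro e _
      simp [Finpartition.copy, Finpartition.empty]
    rw [this]
    simp [hvol]

lemma hmain {E : Finset (Finset (Fin n))} {φ : ℝ} (hφ : 0 ≤ φ) :
    ∀ (N : ℕ) (X : Finset (Fin n)), X.card ≤ N →
      ∃ P : Finpartition X, (∀ Y ∈ P.parts, hgood E φ Y) ∧
        ((E.filter (fun e =>
            2 ≤ (P.parts.filter (fun Y => (e ∩ Y).Nonempty)).card)).card : ℝ)
          ≤ φ * hvol E X * Real.logb 2 X.card := by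
  intro N
  induction N with
  | zero =>
    intro X hX
    have : X = ∅ := Finset.card_eq_zero.mp (Nat.le_zero.mp hX)
    subst this
    exact hmain_empty E φ
  | succ N ih =>
    intro X hX
    by_cases hempty : X = ∅
    · subst hempty; exact hmain_empty E φ
    by_cases hg : hgood E φ X
    · -- X itself is good, indiscrete partition
      refine ⟨Finpartition.indiscrete hempty, ?_, ?_⟩
      · intro Y hY
        simp only [Finpartition.indiscrete, Finset.mem_singleton] at hY
        subst hY; exact hg
      · have h1 : (E.filter (fun e =>
            2 ≤ (((Finpartition.indiscrete hempty).parts.filter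
              (fun Y => (e ∩ Y).Nonempty)).card))) = ∅ := by
          apply Finset.filter_eq_empty_iff.mpr
          intro e _
          simp only [Finpartition.indiscrete, not_le]
          refine lt_of_le_of_lt (Finset.card_le_card (Finset.filter_subset _ _)) ?_
          simp
        rw [h1]
        simp only [Finset.card_empty, Nat.cast_zero]
        apply mul_nonneg (mul_nonneg hφ (hvol_nonneg E X))
        apply Real.logb_nonneg one_lt_two
        have : 1 ≤ X.card := Finset.card_pos.mpr (Finset.nonempty_iff_ne_empty.mpr hempty)
        exact_mod_cast this
    · -- sparse cut
      obtain ⟨A, B, hdisj, hunion, hA, hB, hhalf, hcut⟩ := sparse_cut_exists hφ hg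
      have hcardX : A.card + B.card = X.card := by
        rw [← Finset.card_union_of_disjoint hdisj, hunion]
      have hA1 : 1 ≤ A.card := Finset.card_pos.mpr hA
      have hB1 : 1 ≤ B.card := Finset.card_pos.mpr hB
      obtain ⟨PA, hPAgood, hPAbound⟩ := ih A (by omega)
      obtain ⟨PB, hPBgood, hPBbound⟩ := ih B (by omega)
      obtain ⟨P0, hP0parts⟩ := finpartition_union hdisj PA PB
      refine ⟨P0.copy hunion, ?_, ?_⟩
      · intro Y hY
        rw [Finpartition.copy] at hY
        simp only at hY
        rw [hP0parts, Finset.mem_union] at hY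
        rcases hY with hY | hY
        · exact hPAgood Y hY
        · exact hPBgood Y hY
      · have hparts : (P0.copy hunion).parts = PA.parts ∪ PB.parts := by
          rw [Finpartition.copy]; exact hP0parts
        -- subset claim
        have hsub : E.filter (fun e =>
              2 ≤ (((P0.copy hunion).parts.filter (fun Y => (e ∩ Y).Nonempty)).card)) ⊆
            hcross E A B ∪
              (E.filter (fun e => 2 ≤ ((PA.parts.filter (fun Y => (e ∩ Y).Nonempty)).card))) ∪
              (E.filter (fun e => 2 ≤ ((PB.parts.filter (fun Y => (e ∩ Y).Nonempty)).card))) := by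
          intro e he
          rw [Finset.mem_filter] at he
          obtain ⟨heE, h2⟩ := he
          rw [hparts, Finset.filter_union] at h2
          obtain ⟨Y, hY, Z, hZ, hYZ⟩ := Finset.one_lt_card.mp h2
          have hmemA : ∀ W, W ∈ PA.parts.filter (fun Y => (e ∩ Y).Nonempty) →
              (e ∩ A).Nonempty := by
            intro W hW
            rw [Finset.mem_filter] at hW
            exact hW.2.mono (Finset.inter_subset_inter le_rfl (PA.le hW.1))
          have hmemB : ∀ W, W ∈ PB.parts.filter (fun Y => (e ∩ Y).Nonempty) →
              (e ∩ B).Nonempty := by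
            intro W hW
            rw [Finset.mem_filter] at hW
            exact hW.2.mono (Finset.inter_subset_inter le_rfl (PB.le hW.1))
          rw [Finset.mem_union, Finset.mem_union]
          rw [Finset.mem_union] at hY hZ
          rcases hY with hY | hY <;> rcases hZ with hZ | hZ
          · exact Or.inl (Or.inr (Finset.mem_filter.mpr ⟨heE,
              Finset.one_lt_card.mpr ⟨Y, hY, Z, hZ, hYZ⟩⟩))
          · exact Or.inl (Or.inl (Finset.mem_filter.mpr ⟨heE, hmemA Y hY, hmemB Z hZ⟩))
          · exact Or.inl (Or.inl (Finset.mem_filter.mpr ⟨heE, hmemA Z hZ, hmemB Y hY⟩))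
          · exact Or.inr (Finset.mem_filter.mpr ⟨heE,
              Finset.one_lt_card.mpr ⟨Y, hY, Z, hZ, hYZ⟩⟩)
        have hcard_le : ((E.filter (fun e =>
              2 ≤ (((P0.copy hunion).parts.filter (fun Y => (e ∩ Y).Nonempty)).card))).card : ℝ) ≤
            ((hcross E A B).card : ℝ) +
            ((E.filter (fun e => 2 ≤ ((PA.parts.filter (fun Y => (e ∩ Y).Nonempty)).card))).card : ℝ) +
            ((E.filter (fun e => 2 ≤ ((PB.parts.filter (fun Y => (e ∩ Y).Nonempty)).card))).card : ℝ) := by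
          have := Finset.card_le_card hsub
          have h2 := le_trans this (le_trans (Finset.card_union_le _ _)
            (Nat.add_le_add_right (Finset.card_union_le _ _) _))
          exact_mod_cast h2
        -- numeric part
        have hLA : 1 + Real.logb 2 A.card ≤ Real.logb 2 X.card := by
          have h2A : ((2 * A.card : ℕ) : ℝ) ≤ (X.card : ℝ) := by exact_mod_cast hhalf
          have hApos : (0 : ℝ) < A.card := by exact_mod_cast hA1
          calc 1 + Real.logb 2 A.card = Real.logb 2 (2 * A.card) := by
                rw [Real.logb_mul (by norm_num) (ne_of_gt hApos)]
                simp [Real.logb_self_eq_one]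
            _ ≤ Real.logb 2 X.card := by
                apply Real.logb_le_logb_of_le (by norm_num) (by positivity)
                push_cast at h2A ⊢
                linarith
        have hLB : Real.logb 2 B.card ≤ Real.logb 2 X.card := by
          apply Real.logb_le_logb_of_le (by norm_num)
            (by exact_mod_cast hB1 : (0:ℝ) < (B.card : ℝ))
          have : B.card ≤ X.card := by omega
          exact_mod_cast this
        have hLA0 : 0 ≤ Real.logb 2 A.card :=
          Real.logb_nonneg one_lt_two (by exact_mod_cast hA1)
        have hvolX : hvol E X = hvol E A + hvol E B := by
          rw [← hunion]; exact hvol_union E hdisj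
        have hva := hvol_nonneg E A
        have hvb := hvol_nonneg E B
        rw [hvolX]
        calc ((E.filter (fun e =>
              2 ≤ (((P0.copy hunion).parts.filter (fun Y => (e ∩ Y).Nonempty)).card))).card : ℝ)
            ≤ ((hcross E A B).card : ℝ) +
              ((E.filter (fun e => 2 ≤ ((PA.parts.filter (fun Y => (e ∩ Y).Nonempty)).card))).card : ℝ) +
              ((E.filter (fun e => 2 ≤ ((PB.parts.filter (fun Y => (e ∩ Y).Nonempty)).card))).card : ℝ) := hcard_le
          _ ≤ φ * hvol E A + φ * hvol E A * Real.logb 2 A.card +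
              φ * hvol E B * Real.logb 2 B.card :=
              add_le_add (add_le_add hcut.le hPAbound) hPBbound
          _ ≤ φ * (hvol E A + hvol E B) * Real.logb 2 X.card := by
              nlinarith [mul_nonneg (mul_nonneg hφ hva)
                  (sub_nonneg.mpr hLA : 0 ≤ Real.logb 2 X.card - (1 + Real.logb 2 A.card)),
                mul_nonneg (mul_nonneg hφ hvb)
                  (sub_nonneg.mpr hLB : 0 ≤ Real.logb 2 X.card - Real.logb 2 B.card)]


lemma parts_meeting_le_card {P : Finpartition (Finset.univ : Finset (Fin n))}
    (e : Finset (Fin n)) :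
    (P.parts.filter (fun Y => (e ∩ Y).Nonempty)).card ≤ e.card := by
  have hdisj : ∀ X ∈ P.parts, ∀ Y ∈ P.parts, X ≠ Y → Disjoint (e ∩ X) (e ∩ Y) := by
    intro X hX Y hY hXY
    exact Finset.disjoint_of_subset_left Finset.inter_subset_right
      (Finset.disjoint_of_subset_right Finset.inter_subset_right (P.disjoint hX hY hXY))
  calc (P.parts.filter (fun Y => (e ∩ Y).Nonempty)).card
      = ∑ Y ∈ P.parts.filter (fun Y => (e ∩ Y).Nonempty), 1 := by
        rw [Finset.card_eq_sum_ones]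
    _ ≤ ∑ Y ∈ P.parts.filter (fun Y => (e ∩ Y).Nonempty), (e ∩ Y).card := by
        apply Finset.sum_le_sum
        intro Y hY
        exact Finset.card_pos.mpr (Finset.mem_filter.mp hY).2
    _ ≤ ∑ Y ∈ P.parts, (e ∩ Y).card :=
        Finset.sum_le_sum_of_subset (Finset.filter_subset _ _)
    _ = (P.parts.biUnion (fun Y => e ∩ Y)).card :=
        (Finset.card_biUnion (fun X hX Y hY h => hdisj X hX Y hY h)).symm
    _ ≤ e.card := by
        apply Finset.card_le_card
        intro v hv
        rw [Finset.mem_biUnion] at hv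
        obtain ⟨Y, _, hvY⟩ := hv
        exact (Finset.mem_inter.mp hvY).1

lemma sum_cut_le {E : Finset (Finset (Fin n))} (P : Finpartition (Finset.univ : Finset (Fin n)))
    {r : ℕ} (hr : ∀ e ∈ E, e.card ≤ r) :
    ∑ X ∈ P.parts, (E.filter (fun e => (e ∩ X).Nonempty ∧ (e ∩ Xᶜ).Nonempty)).card ≤
      r * (E.filter (fun e =>
        2 ≤ (P.parts.filter (fun Y => (e ∩ Y).Nonempty)).card)).card := by
  have lhs_eq : ∑ X ∈ P.parts, (E.filter (fun e => (e ∩ X).Nonempty ∧ (e ∩ Xᶜ).Nonempty)).card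
      = ∑ e ∈ E, (P.parts.filter (fun X => (e ∩ X).Nonempty ∧ (e ∩ Xᶜ).Nonempty)).card := by
    simp_rw [Finset.card_filter]
    rw [Finset.sum_comm]
  rw [lhs_eq]
  have rhs_eq : r * (E.filter (fun e =>
      2 ≤ (P.parts.filter (fun Y => (e ∩ Y).Nonempty)).card)).card
      = ∑ e ∈ E, if 2 ≤ (P.parts.filter (fun Y => (e ∩ Y).Nonempty)).card then r else 0 := by
    rw [Finset.sum_ite, Finset.sum_const, Finset.sum_const]
    simp [mul_comm]
  rw [rhs_eq]
  apply Finset.sum_le_sum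
  intro e heE
  by_cases h2 : 2 ≤ (P.parts.filter (fun Y => (e ∩ Y).Nonempty)).card
  · rw [if_pos h2]
    calc (P.parts.filter (fun X => (e ∩ X).Nonempty ∧ (e ∩ Xᶜ).Nonempty)).card
        ≤ (P.parts.filter (fun Y => (e ∩ Y).Nonempty)).card := by
          apply Finset.card_le_card
          apply Finset.monotone_filter_right
          intro X _ hX
          exact hX.1
      _ ≤ e.card := parts_meeting_le_card e
      _ ≤ r := hr e heE
  · rw [if_neg h2]
    have : P.parts.filter (fun X => (e ∩ X).Nonempty ∧ (e ∩ Xᶜ).Nonempty) = ∅ := by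
      apply Finset.filter_eq_empty_iff.mpr
      intro X hX hcontra
      obtain ⟨h1, v, hv⟩ := hcontra
      rw [Finset.mem_inter] at hv
      obtain ⟨Y, hY, hvY⟩ := P.exists_mem (Finset.mem_univ v)
      have hYX : Y ≠ X := by
        intro h
        subst h
        exact (Finset.mem_compl.mp hv.2) hvY
      apply h2
      apply Finset.one_lt_card.mpr
      exact ⟨X, Finset.mem_filter.mpr ⟨hX, h1⟩,
        Y, Finset.mem_filter.mpr ⟨hY, ⟨v, Finset.mem_inter.mpr ⟨hv.1, hvY⟩⟩⟩, hYX.symm⟩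
    rw [this]
    simp

lemma hvol_univ (E : Finset (Finset (Fin n))) :
    (∑ v ∈ (Finset.univ : Finset (Fin n)), ((E.filter (fun e => v ∈ e)).card : ℝ))
      = ∑ e ∈ E, (e.card : ℝ) := by
  have : (∑ v ∈ (Finset.univ : Finset (Fin n)), (E.filter (fun e => v ∈ e)).card)
      = ∑ e ∈ E, e.card := by
    simp_rw [Finset.card_filter]
    rw [Finset.sum_comm]
    apply Finset.sum_congr rfl
    intro e _
    rw [← Finset.card_filter]
    congr 1
    exact Finset.filter_univ_mem e
  exact_mod_cast this


/-- Existential hypergraph expander decomposition: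
There is an absolute constant `c` such that for every `r`-rank hypergraph on `n`
vertices with `p = Σ_e |e|` and every `0 < φ ≤ 1/(r−1)`, there is a partition of
the vertex set with `Σᵢ |δ(Xᵢ)| ≤ c·r·φ·p·log n` such that for every part `Xᵢ`
and nonempty `S ⊊ Xᵢ`, the number of hyperedges intersecting both `S` and
`Xᵢ∖S` is at least `φ·min{vol(S), vol(Xᵢ∖S)}`. -/
theorem hypergraph_expander_decomposition_exists :
    ∃ c : ℝ, 0 < c ∧
      ∀ (n r : ℕ) (E : Finset (Finset (Fin n))), 2 ≤ r →
        (∀ e ∈ E, e.card ≤ r) →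
        ∀ φ : ℝ, 0 < φ → φ ≤ 1 / ((r : ℝ) - 1) →
          ∃ P : Finpartition (Finset.univ : Finset (Fin n)),
            ((∑ X ∈ P.parts,
                (E.filter (fun e => (e ∩ X).Nonempty ∧ (e ∩ Xᶜ).Nonempty)).card : ℕ) : ℝ) ≤
                c * r * φ * (∑ e ∈ E, (e.card : ℝ)) * Real.log n ∧
              ∀ X ∈ P.parts, ∀ S ⊆ X, S.Nonempty → (X \ S).Nonempty →
                φ * min (∑ v ∈ S, ((E.filter (fun e => v ∈ e)).card : ℝ))
                    (∑ v ∈ X \ S, ((E.filter (fun e => v ∈ e)).card : ℝ)) ≤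
                  ((E.filter (fun e => (e ∩ S).Nonempty ∧ (e ∩ (X \ S)).Nonempty)).card : ℝ) := by
  refine ⟨1 / Real.log 2, by positivity, ?_⟩
  intro n r E hr2 hrank φ hφ hφr
  obtain ⟨P, hgoodP, hbound⟩ := hmain (E := E) (φ := φ) hφ.le n
    (Finset.univ : Finset (Fin n)) (by simp)
  refine ⟨P, ?_, ?_⟩
  · have h1 : ((∑ X ∈ P.parts,
        (E.filter (fun e => (e ∩ X).Nonempty ∧ (e ∩ Xᶜ).Nonempty)).card : ℕ) : ℝ) ≤
        (r : ℝ) * ((E.filter (fun e =>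
          2 ≤ (P.parts.filter (fun Y => (e ∩ Y).Nonempty)).card)).card : ℝ) := by
      exact_mod_cast sum_cut_le P hrank
    have h2 : (r : ℝ) * ((E.filter (fun e =>
          2 ≤ (P.parts.filter (fun Y => (e ∩ Y).Nonempty)).card)).card : ℝ) ≤
        (r : ℝ) * (φ * hvol E Finset.univ *
          Real.logb 2 (Finset.univ : Finset (Fin n)).card) :=
      mul_le_mul_of_nonneg_left hbound (Nat.cast_nonneg r)
    have h3 : (r : ℝ) * (φ * hvol E Finset.univ *
          Real.logb 2 (Finset.univ : Finset (Fin n)).card) =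
        1 / Real.log 2 * r * φ * (∑ e ∈ E, (e.card : ℝ)) * Real.log n := by
      have hcard : ((Finset.univ : Finset (Fin n)).card : ℝ) = (n : ℝ) := by simp
      have hv : hvol E Finset.univ = ∑ e ∈ E, (e.card : ℝ) := hvol_univ E
      rw [hcard, hv, Real.logb]
      ring
    calc ((∑ X ∈ P.parts,
        (E.filter (fun e => (e ∩ X).Nonempty ∧ (e ∩ Xᶜ).Nonempty)).card : ℕ) : ℝ)
        ≤ _ := h1
      _ ≤ _ := h2
      _ = _ := h3
  · intro X hX S hS hS1 hS2
    exact hgoodP X hX S hS hS1 hS2
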